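/- Let ρ be a congruence on M_n (n ≥ 1). If 1 ρ a (where a denotes the image of the generator a in M_n), then ρ = M_n × M_n. -/

import Mathlib

inductive Letter | a | b | c | d | z
deriving DecidableEq

abbrev W := FreeMonoid Letter
def A : W := FreeMonoid.of .a
def B : W := FreeMonoid.of .b
def C : W := FreeMonoid.of .c
def D : W := FreeMonoid.of .d
def Z : W := FreeMonoid.of .z

/-- The defining relations of `M n`, with the zero realized by the letter `z`. -/
def relM (n : ℕ) : W → W → Prop := fun x y =>
  (x = A ^ n * B ∧ y = Z) ∨
  (x = A * C ∧ y = 1) ∨ (x = D * B ∧ y = 1) ∨ (x = D * C ∧ y = 1) ∨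
  (∃ k, 1 ≤ k ∧ k ≤ n - 1 ∧ x = D * A ^ k * B ∧ y = 1) ∨
  (∃ l : Letter, x = FreeMonoid.of l * Z ∧ y = Z) ∨
  (∃ l : Letter, x = Z * FreeMonoid.of l ∧ y = Z)

def Mcon (n : ℕ) : Con W := conGen (relM n)

/-- The monoid `M n = Mon⟨a,b,c,d : aⁿb=0, ac=1, db=1, dc=1, daᵏb=1 (1 ≤ k ≤ n-1)⟩`. -/
abbrev M (n : ℕ) := (Mcon n).Quotient

lemma mul_Z (n : ℕ) (w : W) : ((w * Z : W) : M n) = ((Z : W) : M n) := by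
  induction w using FreeMonoid.inductionOn' with
  | one => rw [one_mul]
  | of_mul l w ih =>
      rw [mul_assoc, Con.coe_mul, ih, ← Con.coe_mul]
      exact Con.eq _ |>.2 (ConGen.Rel.of _ _ (Or.inr (Or.inr (Or.inr (Or.inr
        (Or.inr (Or.inl ⟨l, rfl, rfl⟩)))))))

lemma anb_eq (n : ℕ) : ((A ^ n * B : W) : M n) = ((Z : W) : M n) :=
  Con.eq _ |>.2 (ConGen.Rel.of _ _ (Or.inl ⟨rfl, rfl⟩))

lemma dab_eq (n : ℕ) (hn : 1 ≤ n) : ((D * A ^ (n - 1) * B : W) : M n) = 1 := by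
  rcases Nat.lt_or_ge n 2 with h2 | h2
  · interval_cases n
    have : (D * A ^ 0 * B : W) = D * B := by rw [pow_zero, mul_one]
    rw [this]
    exact Con.eq _ |>.2 (ConGen.Rel.of _ _ (Or.inr (Or.inr (Or.inl ⟨rfl, rfl⟩))))
  · exact Con.eq _ |>.2 (ConGen.Rel.of _ _ (Or.inr (Or.inr (Or.inr (Or.inr
      (Or.inl ⟨n - 1, by omega, le_rfl, rfl, rfl⟩))))))

/-- If a congruence on `M n` identifies `1` and `a`, it is the full congruence. -/
theorem stmt7 (n : ℕ) (hn : 1 ≤ n) (ρ : Con (M n)) (h : ρ 1 (A : M n)) : ρ = ⊤ := by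
  -- step 1: ρ (A^(n-1) * B) Z
  have h1 : ρ (((A ^ (n - 1) * B : W) : M n)) ((Z : W) : M n) := by
    have ha := ρ.mul (ρ.mul (ρ.refl ((A : M n) ^ (n - 1))) h) (ρ.refl ((B : W) : M n))
    rw [mul_one] at ha
    have : (A : M n) ^ (n - 1) * (A : M n) = (A : M n) ^ n := by
      rw [← pow_succ]; congr 1; omega
    rw [this] at ha
    have : ((A ^ n * B : W) : M n) = (A : M n) ^ n * B := by
      rfl
    rw [← this, anb_eq] at ha
    have : ((A ^ (n - 1) * B : W) : M n) = (A : M n) ^ (n - 1) * B := by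
      rfl
    rw [this]; exact ha
  -- step 2: ρ 1 Z
  have hDZ : ((D * Z : W) : M n) = ((Z : W) : M n) :=
    Con.eq _ |>.2 (ConGen.Rel.of _ _ (Or.inr (Or.inr (Or.inr (Or.inr
      (Or.inr (Or.inl ⟨.d, rfl, rfl⟩)))))))
  have h2 : ρ 1 ((Z : W) : M n) := by
    have := ρ.mul (ρ.refl ((D : W) : M n)) h1
    rw [← Con.coe_mul, ← Con.coe_mul, ← mul_assoc, dab_eq n hn, hDZ] at this
    exact this
  have key : ∀ x : M n, ρ x ((Z : W) : M n) := by
    intro x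
    induction x using Con.induction_on with
    | H w =>
      have := ρ.mul (ρ.refl ((w : W) : M n)) h2
      rw [mul_one, ← Con.coe_mul, mul_Z] at this
      exact this
  rw [eq_top_iff, Con.le_def]
  intro x y _
  exact ρ.trans (key x) (ρ.symm (key y))
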